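/- If a proper lower-semicontinuous function φ : ℝⁿ → ℝ satisfies φ = M^1 M_1 φ on ℝⁿ (where M_1 and M^1 are the lower and upper Moreau envelopes with parameter 1), then φ is 1-weakly convex: x ↦ φ(x) + (1/2)‖x‖² is convex. -/

import Mathlib

open scoped RealInnerProductSpace
open Filter Topology

noncomputable section

/-- Lower Moreau envelope with parameter 1 (extended-real valued). -/
def lowerEnv1 {n : ℕ} (φ : EuclideanSpace ℝ (Fin n) → ℝ)
    (x : EuclideanSpace ℝ (Fin n)) : EReal :=
  ⨅ y, ((φ y + ‖y - x‖ ^ 2 / 2 : ℝ) : EReal)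

/-- Upper Moreau envelope with parameter 1 of an extended-real valued function. -/
def upperEnv1 {n : ℕ} (g : EuclideanSpace ℝ (Fin n) → EReal)
    (x : EuclideanSpace ℝ (Fin n)) : EReal :=
  ⨆ y, (g y - ((‖y - x‖ ^ 2 / 2 : ℝ) : EReal))

theorem stmt_10 {n : ℕ} (φ : EuclideanSpace ℝ (Fin n) → ℝ)
    (hlsc : LowerSemicontinuous φ)
    (heq : ∀ x, upperEnv1 (lowerEnv1 φ) x = (φ x : EReal)) :
    ConvexOn ℝ Set.univ (fun x => φ x + ‖x‖ ^ 2 / 2) := by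
  refine ⟨convex_univ, fun x₁ _ x₂ _ a b ha hb hab => ?_⟩
  simp only []
  -- key norm identity
  have hnorm : ∀ y : EuclideanSpace ℝ (Fin n),
      a * ‖y - x₁‖ ^ 2 + b * ‖y - x₂‖ ^ 2
        = ‖y - (a • x₁ + b • x₂)‖ ^ 2 + a * b * ‖x₁ - x₂‖ ^ 2 := by
    intro y
    have hy : y - (a • x₁ + b • x₂) = a • (y - x₁) + b • (y - x₂) := by
      have h : y = a • y + b • y := by rw [← add_smul, hab, one_smul]
      calc y - (a • x₁ + b • x₂) = (a • y + b • y) - (a • x₁ + b • x₂) := by rw [← h]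
        _ = a • (y - x₁) + b • (y - x₂) := by rw [smul_sub, smul_sub]; abel
    rw [hy]
    have h12 : x₁ - x₂ = (y - x₂) - (y - x₁) := by abel
    rw [h12]
    set u := y - x₁
    set v := y - x₂
    have e1 : ‖a • u + b • v‖ ^ 2
        = a ^ 2 * ‖u‖ ^ 2 + 2 * (a * b) * ⟪u, v⟫ + b ^ 2 * ‖v‖ ^ 2 := by
      rw [@norm_add_sq_real, norm_smul, norm_smul, real_inner_smul_left,
        real_inner_smul_right]
      simp [abs_of_nonneg ha, abs_of_nonneg hb, mul_pow]
      ring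
    have e2 : ‖v - u‖ ^ 2 = ‖v‖ ^ 2 - 2 * ⟪v, u⟫ + ‖u‖ ^ 2 := by
      rw [@norm_sub_sq_real]
    rw [e1, e2, real_inner_comm v u]
    linear_combination (-(a * ‖u‖ ^ 2) - b * ‖v‖ ^ 2) * hab
  have hx2 : a * ‖x₁‖ ^ 2 + b * ‖x₂‖ ^ 2
      = ‖a • x₁ + b • x₂‖ ^ 2 + a * b * ‖x₁ - x₂‖ ^ 2 := by
    have h0 := hnorm 0
    rw [zero_sub, zero_sub, zero_sub, norm_neg, norm_neg, norm_neg] at h0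
    exact h0
  -- main inequality: φ(ax₁+bx₂) ≤ a φ x₁ + b φ x₂ + a b ‖x₁-x₂‖²/2
  set x := a • x₁ + b • x₂ with hx
  have key : (φ x : EReal) ≤ ((a * φ x₁ + b * φ x₂ + a * b * ‖x₁ - x₂‖ ^ 2 / 2 : ℝ) : EReal) := by
    rw [← heq x]
    refine iSup_le fun y => ?_
    -- bounds on lowerEnv1 φ y
    have hle : ∀ z : EuclideanSpace ℝ (Fin n),
        lowerEnv1 φ y - ((‖y - z‖ ^ 2 / 2 : ℝ) : EReal) ≤ (φ z : EReal) := by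
      intro z
      rw [← heq z]
      exact le_iSup (fun y' => lowerEnv1 φ y' - ((‖y' - z‖ ^ 2 / 2 : ℝ) : EReal)) y
    have hnet : lowerEnv1 φ y ≤ (φ y : EReal) := by
      have := iInf_le (fun y' => ((φ y' + ‖y' - y‖ ^ 2 / 2 : ℝ) : EReal)) y
      simpa [lowerEnv1] using this
    rcases eq_bot_or_bot_lt (lowerEnv1 φ y) with hbot | hbot
    · rw [hbot]
      simp
    · -- lowerEnv1 φ y is a real number t
      lift lowerEnv1 φ y to ℝ using ⟨ne_top_of_le_ne_top (EReal.coe_ne_top _) hnet, hbot.ne'⟩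
        with t ht
      have h1 : t - ‖y - x₁‖ ^ 2 / 2 ≤ φ x₁ := by
        have := hle x₁
        rw [← EReal.coe_sub] at this
        exact_mod_cast this
      have h2 : t - ‖y - x₂‖ ^ 2 / 2 ≤ φ x₂ := by
        have := hle x₂
        rw [← EReal.coe_sub] at this
        exact_mod_cast this
      rw [← EReal.coe_sub, EReal.coe_le_coe_iff]
      have hid := hnorm y
      have hat : a * t + b * t = t := by rw [← add_mul, hab, one_mul]
      nlinarith [hat, mul_le_mul_of_nonneg_left h1 ha, mul_le_mul_of_nonneg_left h2 hb]
  have keyR : φ x ≤ a * φ x₁ + b * φ x₂ + a * b * ‖x₁ - x₂‖ ^ 2 / 2 := by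
    exact_mod_cast key
  have : φ x + ‖x‖ ^ 2 / 2 ≤ a * (φ x₁ + ‖x₁‖ ^ 2 / 2) + b * (φ x₂ + ‖x₂‖ ^ 2 / 2) := by
    nlinarith [hx2]
  simpa [hx, smul_eq_mul] using this
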